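/- Any sub-travel of a cost-optimal travel is cost-optimal: if T = T1 ⊕ T' ⊕ T2 is a travel from u to v arriving at time t with minimum cost among all travels with the same start and end node and times, then T' has minimum cost among travels with the same start and end (node, time) pairs as T'. -/
import Mathlib


variable {V : Type*}

/-- Validity of a travel in an evolving graph `E`: along the sequence, a change
of node requires equal times and an edge at that time; time changes at a fixed
node are unconstrained. -/
def IsTravel (E : ℕ → V → V → Prop) : List (V × ℕ) → Prop
  | [] => True
  | [_] => True
  | (u, t) :: (v, s) :: rest =>
      (u ≠ v → t = s ∧ E t u v) ∧ IsTravel E ((v, s) :: rest)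

/-- Backward cost of a travel for a cost function `τ : ℤ → ℝ`
(applied to the differences `t_i - t_{i+1}`). -/
def travelCost (τ : ℤ → ℝ) : List (V × ℕ) → ℝ
  | [] => 0
  | [_] => 0
  | (_, t) :: (v, s) :: rest => τ ((t : ℤ) - (s : ℤ)) + travelCost τ ((v, s) :: rest)

/-- `T` is a travel in `E` starting at the (node, time) pair `a` and ending at `b`. -/
def TravelFromTo (E : ℕ → V → V → Prop) (T : List (V × ℕ)) (a b : V × ℕ) : Prop :=
  IsTravel E T ∧ T.head? = some a ∧ T.getLast? = some b

/-- A travel is simple if no node appears in two non-adjacent positions. -/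
def SimpleTravel (T : List (V × ℕ)) : Prop :=
  ∀ i j : Fin T.length, (i : ℕ) + 2 ≤ (j : ℕ) → (T.get i).1 ≠ (T.get j).1

lemma isTravel_glue (E : ℕ → V → V → Prop) :
    ∀ (A : List (V × ℕ)) (y : V × ℕ) (rest : List (V × ℕ)),
      IsTravel E A → A.getLast? = some y → IsTravel E (y :: rest) →
      IsTravel E (A ++ rest)
  | [], y, rest => by simp
  | [x], y, rest => by
    intro _ hx hrest
    simp at hx
    subst hx
    simpa using hrest
  | x :: x' :: A'', y, rest => by
    intro hA hlast hrest
    obtain ⟨hc, hA'⟩ := hA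
    refine ⟨hc, ?_⟩
    exact isTravel_glue E (x' :: A'') y rest hA'
      (by simpa [List.getLast?_cons_cons] using hlast) hrest

lemma travelCost_glue (τ : ℤ → ℝ) :
    ∀ (A : List (V × ℕ)) (y : V × ℕ) (rest : List (V × ℕ)),
      A.getLast? = some y →
      travelCost τ (A ++ rest) = travelCost τ A + travelCost τ (y :: rest)
  | [], y, rest => by simp
  | [x], y, rest => by
    intro hx
    simp at hx
    subst hx
    simp [travelCost]
  | x :: x' :: A'', y, rest => by
    intro hlast
    have := travelCost_glue τ (x' :: A'') y rest
      (by simpa [List.getLast?_cons_cons] using hlast)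
    simp only [List.cons_append] at this ⊢
    rw [show travelCost τ (x :: (x' :: (A'' ++ rest))) =
      τ ((x.2 : ℤ) - (x'.2 : ℤ)) + travelCost τ (x' :: (A'' ++ rest)) from rfl,
      this, show travelCost τ (x :: x' :: A'') =
      τ ((x.2 : ℤ) - (x'.2 : ℤ)) + travelCost τ (x' :: A'') from rfl]
    ring

lemma getLast?_glue (A : List (V × ℕ)) (y : V × ℕ) (rest : List (V × ℕ))
    (h : A.getLast? = some y) :
    (A ++ rest).getLast? = (y :: rest).getLast? := by
  cases rest with
  | nil => simpa using h
  | cons r rs =>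
    simp [List.getLast?_append, List.getLast?_cons_cons]
    cases h' : (r :: rs).getLast? with
    | none => simp at h'
    | some w => simp

lemma travelFromTo_glue (E : ℕ → V → V → Prop) (A B : List (V × ℕ)) (x y z : V × ℕ)
    (hA : TravelFromTo E A x y) (hB : TravelFromTo E B y z) :
    TravelFromTo E (A ++ B.tail) x z := by
  obtain ⟨hA1, hA2, hA3⟩ := hA
  obtain ⟨hB1, hB2, hB3⟩ := hB
  cases B with
  | nil => simp at hB2
  | cons b0 B' =>
    simp at hB2; subst hB2
    refine ⟨isTravel_glue E A b0 B' hA1 hA3 hB1, ?_, ?_⟩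
    · cases A with
      | nil => simp at hA2
      | cons a0 A' => simpa using hA2
    · rw [show (b0 :: B').tail = B' from rfl, getLast?_glue A b0 B' hA3]; exact hB3

lemma travelCost_glue' (τ : ℤ → ℝ) (A B : List (V × ℕ)) (y : V × ℕ)
    (hA : A.getLast? = some y) (hB : B.head? = some y) :
    travelCost τ (A ++ B.tail) = travelCost τ A + travelCost τ B := by
  cases B with
  | nil => simp at hB
  | cons b0 B' =>
    simp at hB; subst hB
    exact travelCost_glue τ A b0 B' hA

/-- Any sub-travel of a cost-optimal travel is cost-optimal: if
`T = T1 ⊕ T' ⊕ T2` is a cost-minimal travel from `a` to `b`, then `T'` is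
cost-minimal among travels with the same endpoints as `T'`. -/
theorem subtravel_cost_optimal (E : ℕ → V → V → Prop) (τ : ℤ → ℝ)
    (a a' b' b : V × ℕ) (T T1 T' T2 : List (V × ℕ))
    (hT1 : TravelFromTo E T1 a a') (hT' : TravelFromTo E T' a' b')
    (hT2 : TravelFromTo E T2 b' b)
    (hdecomp : T = T1 ++ T'.tail ++ T2.tail)
    (hopt : ∀ S, TravelFromTo E S a b → travelCost τ T ≤ travelCost τ S) :
    ∀ S, TravelFromTo E S a' b' → travelCost τ T' ≤ travelCost τ S := by
  intro S hS
  have hU : TravelFromTo E (T1 ++ S.tail) a b' := travelFromTo_glue E T1 S a a' b' hT1 hS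
  have hS' : TravelFromTo E ((T1 ++ S.tail) ++ T2.tail) a b :=
    travelFromTo_glue E (T1 ++ S.tail) T2 a b' b hU hT2
  have key := hopt _ hS'
  have cS' : travelCost τ ((T1 ++ S.tail) ++ T2.tail)
      = travelCost τ T1 + travelCost τ S + travelCost τ T2 := by
    rw [travelCost_glue' τ (T1 ++ S.tail) T2 b' hU.2.2 hT2.2.1,
      travelCost_glue' τ T1 S a' hT1.2.2 hS.2.1]
  have hU' : TravelFromTo E (T1 ++ T'.tail) a b' := travelFromTo_glue E T1 T' a a' b' hT1 hT'
  have cT : travelCost τ T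
      = travelCost τ T1 + travelCost τ T' + travelCost τ T2 := by
    rw [hdecomp,
      travelCost_glue' τ (T1 ++ T'.tail) T2 b' hU'.2.2 hT2.2.1,
      travelCost_glue' τ T1 T' a' hT1.2.2 hT'.2.1]
  rw [cT, cS'] at key
  linarith
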